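/- Assume Hom(M⟦1⟧, Y) = 0 and assume that M₁ lies in add(M). Then Hom_{K(T)}(P•, P•⟦-1⟧) = 0, i.e. every morphism from P• to the shifted complex P•⟦-1⟧ in the homotopy category K(T) is zero. Concretely: every morphism v : M ⊞ M₁ ⟶ X with v ≫ d̄ = 0 and d̄ ≫ v = 0 is zero. -/

import Mathlib

open CategoryTheory CategoryTheory.Limits CategoryTheory.Pretriangulated ZeroObject

universe v u

/-- The object part of the cochain complex concentrated in degrees `0` and `1`,
with `A` in degree `0` and `B` in degree `1`. -/
noncomputable def twoObj {C : Type u} [Category.{v} C] [HasZeroObject C]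
    (A B : C) (i : ℤ) : C :=
  if i = 0 then A else if i = 1 then B else 0

/-- The cochain complex over `C` concentrated in degrees `0` and `1`, with
`A` in degree `0`, `B` in degree `1` and differential `d : A ⟶ B`. -/
noncomputable def twoTermComplex {C : Type u} [Category.{v} C] [Preadditive C]
    [HasZeroObject C] {A B : C} (d : A ⟶ B) : CochainComplex C ℤ where
  X := twoObj A B
  d i j :=
    if hij : i = 0 ∧ j = 1 then
      eqToHom (show twoObj A B i = A by simp [twoObj, hij.1]) ≫ d ≫
        eqToHom (show B = twoObj A B j by simp [twoObj, hij.2])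
    else 0
  shape i j hij := by
    try dsimp only
    rw [dif_neg]
    rintro ⟨rfl, rfl⟩
    exact hij rfl
  d_comp_d' i j k hij hjk := by
    try dsimp only
    by_cases h' : i = 0 ∧ j = 1
    · rw [dif_neg (fun hk : j = 0 ∧ k = 1 => by simp [h'.2] at hk), comp_zero]
    · rw [dif_neg h', zero_comp]

section Aux

lemma twoTermComplex_d_zero {C : Type u} [Category.{v} C] [Preadditive C]
    [HasZeroObject C] {A B : C} (d : A ⟶ B) (i j : ℤ) (hij : ¬(i = 0 ∧ j = 1)) :
    (twoTermComplex d).d i j = 0 :=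
  dif_neg hij

lemma twoTermComplex_d_pos {C : Type u} [Category.{v} C] [Preadditive C]
    [HasZeroObject C] {A B : C} (d : A ⟶ B) (i j : ℤ) (hi : i = 0) (hj : j = 1) :
    (twoTermComplex d).d i j =
      eqToHom (show twoObj A B i = A by simp [twoObj, hi]) ≫ d ≫
        eqToHom (show B = twoObj A B j by simp [twoObj, hj]) :=
  dif_pos ⟨hi, hj⟩

variable {T : Type u} [Category.{v} T] [Preadditive T] [HasZeroObject T]
    [HasShift T ℤ] [∀ n : ℤ, (shiftFunctor T n).Additive]
    [HasBinaryBiproducts T] [HasFiniteBiproducts T]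

lemma aux_hom_zero (M M₁ Y : T)
    (hadd : ∃ (n : ℕ) (s : M₁ ⟶ ⨁ fun _ : Fin n => M) (r : (⨁ fun _ : Fin n => M) ⟶ M₁),
      s ≫ r = 𝟙 M₁)
    (hMY : ∀ φ : (M⟦(1 : ℤ)⟧ : T) ⟶ Y, φ = 0) :
    ∀ u : ((M ⊞ M₁)⟦(1 : ℤ)⟧ : T) ⟶ Y, u = 0 := by
  obtain ⟨n, s, r, hsr⟩ := hadd
  have hbig : ∀ u : ((⨁ fun _ : Fin n => M)⟦(1 : ℤ)⟧ : T) ⟶ Y, u = 0 := by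
    intro u
    have h1 : u = (shiftFunctor T (1 : ℤ)).map (𝟙 _) ≫ u := by
      rw [CategoryTheory.Functor.map_id, Category.id_comp]
    rw [h1, ← biproduct.total, Functor.map_sum, Preadditive.sum_comp]
    refine Finset.sum_eq_zero fun j _ => ?_
    rw [Functor.map_comp, Category.assoc,
      hMY ((shiftFunctor T (1 : ℤ)).map (biproduct.ι (fun _ : Fin n => M) j) ≫ u), comp_zero]
  have hM₁ : ∀ u : ((M₁)⟦(1 : ℤ)⟧ : T) ⟶ Y, u = 0 := by
    intro u
    have h1 : u = (shiftFunctor T (1 : ℤ)).map s ≫ ((shiftFunctor T (1 : ℤ)).map r ≫ u) := by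
      rw [← Category.assoc, ← Functor.map_comp, hsr, CategoryTheory.Functor.map_id,
        Category.id_comp]
    rw [h1, hbig ((shiftFunctor T (1 : ℤ)).map r ≫ u), comp_zero]
  intro u
  have h1 : u = (shiftFunctor T (1 : ℤ)).map (𝟙 _) ≫ u := by
    rw [CategoryTheory.Functor.map_id, Category.id_comp]
  rw [h1, ← biprod.total, Functor.map_add, Preadditive.add_comp,
    Functor.map_comp, Functor.map_comp, Category.assoc, Category.assoc,
    hMY ((shiftFunctor T (1 : ℤ)).map biprod.inl ≫ u),
    hM₁ ((shiftFunctor T (1 : ℤ)).map biprod.inr ≫ u), comp_zero, comp_zero, add_zero]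

lemma aux_key [Pretriangulated T]
    (M X M₁ Y : T) (f : X ⟶ M₁) (g : M₁ ⟶ Y) (h : Y ⟶ X⟦(1 : ℤ)⟧)
    (hT : Triangle.mk f g h ∈ distTriang T)
    (hadd : ∃ (n : ℕ) (s : M₁ ⟶ ⨁ fun _ : Fin n => M) (r : (⨁ fun _ : Fin n => M) ⟶ M₁),
      s ≫ r = 𝟙 M₁)
    (hMY : ∀ φ : (M⟦(1 : ℤ)⟧ : T) ⟶ Y, φ = 0) :
    ∀ v : (M ⊞ M₁) ⟶ X, v ≫ f = 0 → v = 0 := by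
  intro v hvf
  obtain ⟨w, hw⟩ := Triangle.coyoneda_exact₂ _ (inv_rot_of_distTriang _ hT) v hvf
  have hw0 : w = 0 := by
    apply (shiftFunctor T (1 : ℤ)).map_injective
    rw [Functor.map_zero]
    have hz := aux_hom_zero M M₁ Y hadd hMY
      ((shiftFunctor T (1 : ℤ)).map w ≫
        (shiftFunctorCompIsoId T (-1 : ℤ) (1 : ℤ) (by ring)).hom.app Y)
    exact (cancel_mono ((shiftFunctorCompIsoId T (-1 : ℤ) (1 : ℤ) (by ring)).hom.app Y)).1
      (hz.trans zero_comp.symm)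
  rw [hw, hw0, zero_comp]
  rfl

lemma aux_part1 (M X M₁ : T) (f : X ⟶ M₁)
    (key : ∀ v : (M ⊞ M₁) ⟶ X, v ≫ biprod.lift (0 : X ⟶ M) f = 0 → v = 0) :
    ∀ φ : (HomotopyCategory.quotient T (ComplexShape.up ℤ)).obj
          (twoTermComplex (biprod.lift (0 : X ⟶ M) f)) ⟶
        (((HomotopyCategory.quotient T (ComplexShape.up ℤ)).obj
          (twoTermComplex (biprod.lift (0 : X ⟶ M) f)))⟦(-1 : ℤ)⟧), φ = 0 := by
  intro φ
  obtain ⟨ψ, hψ⟩ := (HomotopyCategory.quotient T (ComplexShape.up ℤ)).map_surjective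
    (φ ≫ ((HomotopyCategory.quotient T (ComplexShape.up ℤ)).commShiftIso (-1 : ℤ)).inv.app
      (twoTermComplex (biprod.lift (0 : X ⟶ M) f)))
  have hψ0 : ψ = 0 := by
    ext i
    rcases eq_or_ne i 1 with rfl | h1
    · have eA : (M ⊞ M₁) = (twoTermComplex (biprod.lift (0 : X ⟶ M) f)).X 1 := by
        norm_num [twoTermComplex, twoObj]
      have e₁ : twoObj X (M ⊞ M₁) (1 + -1) = X := by norm_num [twoObj]
      have e₂ : (M ⊞ M₁) = twoObj X (M ⊞ M₁) (2 + -1) := by norm_num [twoObj]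
      have hcomm : ψ.f 1 ≫ ((-1 : ℤ).negOnePow •
          (twoTermComplex (biprod.lift (0 : X ⟶ M) f)).d (1 + -1) (2 + -1)) =
          (twoTermComplex (biprod.lift (0 : X ⟶ M) f)).d 1 2 ≫ ψ.f 2 := ψ.comm 1 2
      rw [twoTermComplex_d_zero _ 1 2 (by norm_num), zero_comp] at hcomm
      replace hcomm : (-1 : ℤ).negOnePow • (ψ.f 1 ≫
          (twoTermComplex (biprod.lift (0 : X ⟶ M) f)).d (1 + -1) (2 + -1)) = 0 :=
        (Linear.comp_units_smul _ _ _).symm.trans hcomm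
      have hL : ψ.f 1 ≫ (twoTermComplex (biprod.lift (0 : X ⟶ M) f)).d (1 + -1) (2 + -1)
          = 0 := by
        have h2 := congrArg (fun z => ((-1 : ℤ).negOnePow)⁻¹ • z) hcomm
        simpa [inv_smul_smul] using h2
      rw [twoTermComplex_d_pos _ (1 + -1) (2 + -1) (by norm_num) (by norm_num)] at hL
      have hv : (eqToHom eA ≫ ψ.f 1 ≫ eqToHom e₁) ≫ biprod.lift (0 : X ⟶ M) f = 0 := by
        have hL' : ψ.f 1 ≫ eqToHom e₁ ≫ biprod.lift (0 : X ⟶ M) f = 0 := by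
          rw [← cancel_mono (eqToHom e₂)]
          simp only [Category.assoc, zero_comp]
          exact hL
        simp only [Category.assoc]
        rw [hL', comp_zero]
      have hv0 := key _ hv
      have hf1 : ψ.f 1 = eqToHom eA.symm ≫
          (eqToHom eA ≫ ψ.f 1 ≫ eqToHom e₁) ≫ eqToHom e₁.symm := by
        simp
        erw [Category.assoc, eqToHom_trans, eqToHom_refl, Category.comp_id]
      rw [hf1, hv0, zero_comp, comp_zero]
      simp
      rfl
    · rcases eq_or_ne i 0 with rfl | h0
      · have hz : IsZero ((twoTermComplex (biprod.lift (0 : X ⟶ M) f)).X (0 + -1)) := by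
          have e : (twoTermComplex (biprod.lift (0 : X ⟶ M) f)).X (0 + -1) = 0 := by
            norm_num [twoTermComplex, twoObj]
          rw [e]
          exact isZero_zero T
        exact hz.eq_of_tgt _ _
      · have hz : IsZero ((twoTermComplex (biprod.lift (0 : X ⟶ M) f)).X i) := by
          have e : (twoTermComplex (biprod.lift (0 : X ⟶ M) f)).X i = 0 := by
            simp [twoTermComplex, twoObj, h0, h1]
          rw [e]
          exact isZero_zero T
        exact hz.eq_of_src _ _
  have hφ : φ = (φ ≫ ((HomotopyCategory.quotient T (ComplexShape.up ℤ)).commShiftIso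
      (-1 : ℤ)).inv.app (twoTermComplex (biprod.lift (0 : X ⟶ M) f))) ≫
      ((HomotopyCategory.quotient T (ComplexShape.up ℤ)).commShiftIso (-1 : ℤ)).hom.app
        (twoTermComplex (biprod.lift (0 : X ⟶ M) f)) := by simp
  rw [hφ, ← hψ, hψ0, Functor.map_zero, zero_comp]

end Aux

/-- Let `T` be a pretriangulated category with binary biproducts,
`M` an object of `T` and `X ⟶f M₁ ⟶g Y ⟶h X⟦1⟧` a distinguished triangle.
Assume `Hom(M⟦1⟧, Y) = 0` and `M₁ ∈ add M`.  Then
`Hom_{K(T)}(P•, P•⟦-1⟧) = 0` for the two-term complex `P• = (X ⟶d̄ M ⊞ M₁)`;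
concretely, every `v : M ⊞ M₁ ⟶ X` with `v ≫ d̄ = 0` and `d̄ ≫ v = 0` is zero. -/
theorem statement8 {T : Type u} [Category.{v} T] [Preadditive T] [HasZeroObject T]
    [HasShift T ℤ] [∀ n : ℤ, (shiftFunctor T n).Additive] [Pretriangulated T]
    [HasBinaryBiproducts T] [HasFiniteBiproducts T]
    (M X M₁ Y : T) (f : X ⟶ M₁) (g : M₁ ⟶ Y) (h : Y ⟶ X⟦(1 : ℤ)⟧)
    (hT : Triangle.mk f g h ∈ distTriang T)
    (hadd : ∃ (n : ℕ) (s : M₁ ⟶ ⨁ fun _ : Fin n => M) (r : (⨁ fun _ : Fin n => M) ⟶ M₁),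
      s ≫ r = 𝟙 M₁)
    (hMY : ∀ φ : (M⟦(1 : ℤ)⟧ : T) ⟶ Y, φ = 0)
    (P : CochainComplex T ℤ) (hP : P = twoTermComplex (biprod.lift (0 : X ⟶ M) f)) :
    (∀ φ : (HomotopyCategory.quotient T (ComplexShape.up ℤ)).obj P ⟶
        (((HomotopyCategory.quotient T (ComplexShape.up ℤ)).obj P)⟦(-1 : ℤ)⟧), φ = 0) ∧
      (∀ v : (M ⊞ M₁) ⟶ X,
        v ≫ biprod.lift (0 : X ⟶ M) f = 0 → biprod.lift (0 : X ⟶ M) f ≫ v = 0 → v = 0) := by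
  have key : ∀ v : (M ⊞ M₁) ⟶ X, v ≫ biprod.lift (0 : X ⟶ M) f = 0 → v = 0 := by
    intro v hv
    have hvf : v ≫ f = 0 := by
      have h2 := congrArg (· ≫ biprod.snd) hv
      simpa using h2
    exact aux_key M X M₁ Y f g h hT hadd hMY v hvf
  subst hP
  exact ⟨aux_part1 M X M₁ f key, fun v hv _ => key v hv⟩
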